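/- Given a d-tuple of commuting diagonal matrices D and a d-tuple of self-adjoint matrices Γ satisfying [D^r, Γ^s] = [D^s, Γ^r] and [Γ̃^r, Γ̃^s] = 0 for all r,s, the curve S^r(t) = e^{Yt}(D^r + tΓ̃^r)e^{−Yt} consists of pairwise-commuting self-adjoint matrices for every t, where Y is the skew-Hermitian matrix with Y_{ij} = Γ^q_{ij}/(x^q_j − x^q_i) when x_i ≠ x_j (q chosen with x^q_i ≠ x^q_j) and Y_{ij} = 0 otherwise. -/

import Mathlib

open NormedSpace Matrix

/-- Given diagonal `D^r` and self-adjoint `Γ^r` with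
`[D^r, Γ^s] = [D^s, Γ^r]` and `[Γ̃^r, Γ̃^s] = 0`, the curve
`S^r(t) = e^{Yt}(D^r + tΓ̃^r)e^{−Yt}` consists of pairwise-commuting self-adjoint
matrices for every `t`, where `Y_{ij} = Γ^q_{ij}/(x^q_j − x^q_i)` when `x_i ≠ x_j`
(with `x^q_i ≠ x^q_j`) and `Y_{ij} = 0` otherwise. -/
theorem stmt2 (d n : ℕ) (x : Fin n → Fin d → ℝ)
    (D Γ Γt : Fin d → Matrix (Fin n) (Fin n) ℂ)
    (hD : ∀ r, D r = Matrix.diagonal fun i => (x i r : ℂ))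
    (hherm : ∀ r, (Γ r).IsHermitian)
    (hΓt : ∀ r i j, Γt r i j = if x i = x j then Γ r i j else 0)
    (hcomm1 : ∀ r s, D r * Γ s - Γ s * D r = D s * Γ r - Γ r * D s)
    (hcomm2 : ∀ r s, Γt r * Γt s = Γt s * Γt r)
    (Y : Matrix (Fin n) (Fin n) ℂ)
    (hY0 : ∀ i j, x i = x j → Y i j = 0)
    (hY : ∀ i j q, x i q ≠ x j q → Y i j = Γ q i j / ((x j q : ℂ) - (x i q : ℂ)))
    (S : Fin d → ℝ → Matrix (Fin n) (Fin n) ℂ)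
    (hS : ∀ r t, S r t = exp (t • Y) * (D r + t • Γt r) * exp (-(t • Y)))
    (t : ℝ) :
    (∀ r s, S r t * S s t = S s t * S r t) ∧ ∀ r, (S r t).IsHermitian := by
  set A : Matrix (Fin n) (Fin n) ℂ := t • Y with hA
  -- exp(A) * exp(-A) = 1 and exp(-A) * exp(A) = 1
  have hc : Commute A (-A) := (Commute.refl A).neg_right
  have h1 : exp A * exp (-A) = 1 := by
    rw [← Matrix.exp_add_of_commute A (-A) hc, add_neg_cancel, NormedSpace.exp_zero]
  have h2 : exp (-A) * exp A = 1 := by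
    rw [← Matrix.exp_add_of_commute (-A) A hc.symm, neg_add_cancel, NormedSpace.exp_zero]
  -- D r commutes with Γt s
  have hDΓt : ∀ r s, D r * Γt s = Γt s * D r := by
    intro r s
    ext i j
    rw [hD r]
    rw [Matrix.diagonal_mul, Matrix.mul_diagonal, hΓt]
    by_cases h : x i = x j
    · simp [h, mul_comm]
    · simp [h]
  -- middle matrices commute
  have hmid : ∀ r s, (D r + t • Γt r) * (D s + t • Γt s)
      = (D s + t • Γt s) * (D r + t • Γt r) := by
    intro r s
    have hDD : D r * D s = D s * D r := by
      rw [hD r, hD s, Matrix.diagonal_mul_diagonal, Matrix.diagonal_mul_diagonal]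
      have he : (fun i => (x i r : ℂ) * (x i s : ℂ)) = fun i => (x i s : ℂ) * (x i r : ℂ) := by
        funext i; ring
      rw [he]
    simp only [Matrix.add_mul, Matrix.mul_add, Matrix.mul_smul, Matrix.smul_mul]
    rw [hDD, hDΓt r s, hDΓt s r, hcomm2 r s]
    simp only [smul_add]
    abel
  constructor
  · intro r s
    rw [hS r t, hS s t]
    calc exp A * (D r + t • Γt r) * exp (-A) * (exp A * (D s + t • Γt s) * exp (-A))
        = exp A * ((D r + t • Γt r) * (D s + t • Γt s)) * exp (-A) := by
          rw [show exp A * (D r + t • Γt r) * exp (-A) * (exp A * (D s + t • Γt s) * exp (-A))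
              = exp A * (D r + t • Γt r) * (exp (-A) * exp A) * (D s + t • Γt s) * exp (-A) by
            noncomm_ring]
          rw [h2]; noncomm_ring
      _ = exp A * ((D s + t • Γt s) * (D r + t • Γt r)) * exp (-A) := by rw [hmid]
      _ = exp A * (D s + t • Γt s) * exp (-A) * (exp A * (D r + t • Γt r) * exp (-A)) := by
          rw [show exp A * (D s + t • Γt s) * exp (-A) * (exp A * (D r + t • Γt r) * exp (-A))
              = exp A * (D s + t • Γt s) * (exp (-A) * exp A) * (D r + t • Γt r) * exp (-A) by
            noncomm_ring]
          rw [h2]; noncomm_ring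
  · -- self-adjointness
    have hYskew : Yᴴ = -Y := by
      ext i j
      simp only [Matrix.conjTranspose_apply, Matrix.neg_apply]
      by_cases h : x i = x j
      · rw [hY0 i j h, hY0 j i h.symm, star_zero, neg_zero]
      · obtain ⟨q, hq⟩ := Function.ne_iff.mp h
        have hq' : x j q ≠ x i q := fun e => hq e.symm
        rw [hY j i q hq', hY i j q hq]
        have hne : (x j q : ℂ) - (x i q : ℂ) ≠ 0 := by
          intro e
          apply hq
          have := sub_eq_zero.mp e
          exact_mod_cast this.symm
        rw [star_div₀, (hherm q).apply i j,
          show (star ((x i q : ℂ) - (x j q : ℂ)) : ℂ) = (x i q : ℂ) - (x j q : ℂ) by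
            rw [star_sub]
            simp [Complex.star_def, Complex.conj_ofReal]]
        have hne' : (x i q : ℂ) - (x j q : ℂ) ≠ 0 := by
          intro e
          have h2' := sub_eq_zero.mp e
          exact hq (by exact_mod_cast h2')
        field_simp
        ring
    have hAskew : Aᴴ = -A := by
      rw [hA, Matrix.conjTranspose_smul, star_trivial, hYskew, smul_neg]
    have hEH : (exp A)ᴴ = exp (-A) := by
      rw [← Matrix.exp_conjTranspose, hAskew]
    have hEH' : (exp (-A))ᴴ = exp A := by
      rw [← Matrix.exp_conjTranspose, Matrix.conjTranspose_neg, hAskew, neg_neg]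
    have hDh : ∀ r, (D r)ᴴ = D r := by
      intro r
      rw [hD r, Matrix.diagonal_conjTranspose]
      have hst : (star fun i => ((x i r : ℂ))) = fun i => ((x i r : ℂ)) := by
        funext i
        simp [Complex.conj_ofReal]
      rw [hst]
    have hΓth : ∀ r, (Γt r)ᴴ = Γt r := by
      intro r
      ext i j
      rw [Matrix.conjTranspose_apply, hΓt r j i, hΓt r i j]
      by_cases h : x i = x j
      · rw [if_pos h.symm, if_pos h]
        exact (hherm r).apply i j
      · rw [if_neg (Ne.symm h), if_neg h, star_zero]
    intro r
    rw [hS r t]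
    show (exp A * (D r + t • Γt r) * exp (-A))ᴴ = _
    rw [Matrix.conjTranspose_mul, Matrix.conjTranspose_mul, hEH, hEH',
      Matrix.conjTranspose_add, hDh r, Matrix.conjTranspose_smul, star_trivial, hΓth r]
    noncomm_ring
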